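/- Let τ: 𝒜* → ℬ* and σ: ℬ* → 𝒞* be non-erasing morphisms, let Y ⊆ 𝒜^ℤ be a subshift, and let X be the smallest subshift containing τ(Y). Then σ ∘ τ is recognizable in Y if and only if τ is recognizable in Y and σ is recognizable in X. -/

import Mathlib

open Filter Topology
open scoped ENNReal

section Defs

variable {A B C : Type*}

/-- The shift of a two-sided sequence by `k`. -/
def shiftBy (k : ℤ) (x : ℤ → A) : ℤ → A := fun n => x (n + k)

/-- The finite word `x_m x_{m+1} ⋯ x_{m+len-1}` read in the two-sided sequence `x`. -/
def factorAt (x : ℤ → A) (m : ℤ) (len : ℕ) : List A :=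
  (List.range len).map fun i => x (m + (i : ℤ))

/-- Extension of a morphism (given on letters) to finite words. -/
def wordImage (τ : A → List B) (w : List A) : List B := (w.map τ).flatten

/-- Composition of two morphisms. -/
def morphComp (σ : B → List C) (τ : A → List B) : A → List C :=
  fun a => wordImage σ (τ a)

/-- A morphism is non-erasing if no letter is sent to the empty word. -/
def NonErasing (τ : A → List B) : Prop := ∀ a, τ a ≠ []

/-- A morphism is positive if every target letter occurs in the image of each letter. -/
def PositiveMorph (τ : A → List B) : Prop := ∀ a : A, ∀ b : B, b ∈ τ a

/-- A morphism is proper if all images start with the same letter and end with the same letter. -/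
def ProperMorph (τ : A → List B) : Prop :=
  ∃ b b' : B, ∀ a : A, (τ a).head? = some b ∧ (τ a).getLast? = some b'

/-- Cumulative lengths of the images `τ(y_0 ⋯ y_{n-1})` (or the negative part for `n < 0`). -/
def cumLen (τ : A → List B) (y : ℤ → A) (n : ℤ) : ℤ :=
  if 0 ≤ n then ∑ i ∈ Finset.range n.toNat, ((τ (y (i : ℤ))).length : ℤ)
  else -∑ i ∈ Finset.range (-n).toNat, ((τ (y (-(i : ℤ) - 1))).length : ℤ)

/-- `z` is the two-sided concatenation of the images of the letters of `y` under `τ`,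
the image of the 0-th coordinate starting at coordinate 0. -/
def IsSeqImage (τ : A → List B) (y : ℤ → A) (z : ℤ → B) : Prop :=
  ∀ (n : ℤ) (j : Fin (τ (y n)).length), z (cumLen τ y n + ((j : ℕ) : ℤ)) = (τ (y n)).get j

/-- `(k, y)` is a centered `τ`-representation of `x` in `Y`. -/
def IsCenteredRep (τ : A → List B) (Y : Set (ℤ → A)) (x : ℤ → B) (k : ℕ) (y : ℤ → A) : Prop :=
  y ∈ Y ∧ k < (τ (y 0)).length ∧ ∃ z, IsSeqImage τ y z ∧ x = shiftBy (k : ℤ) z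

/-- `τ` is recognizable in `Y`: every point has at most one centered `τ`-representation in `Y`. -/
def RecognizableIn (τ : A → List B) (Y : Set (ℤ → A)) : Prop :=
  ∀ (x : ℤ → B) (k k' : ℕ) (y y' : ℤ → A),
    IsCenteredRep τ Y x k y → IsCenteredRep τ Y x k' y' → k = k' ∧ y = y'

/-- A two-sided sequence is aperiodic for the shift. -/
def AperiodicPoint (x : ℤ → A) : Prop := ∀ k : ℤ, k ≠ 0 → shiftBy k x ≠ x

/-- `τ` is recognizable in `Y` for aperiodic points. -/
def RecognizableInForAperiodic (τ : A → List B) (Y : Set (ℤ → A)) : Prop :=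
  ∀ (x : ℤ → B) (k k' : ℕ) (y y' : ℤ → A), AperiodicPoint x →
    IsCenteredRep τ Y x k y → IsCenteredRep τ Y x k' y' → k = k' ∧ y = y'

/-- A subshift: a closed shift-invariant subset of `A^ℤ`. -/
def IsSubshift [TopologicalSpace A] (X : Set (ℤ → A)) : Prop :=
  IsClosed X ∧ ∀ k : ℤ, ∀ x ∈ X, shiftBy k x ∈ X

/-- A minimal subshift: nonempty and every orbit is dense in it. -/
def MinimalSubshift [TopologicalSpace A] (X : Set (ℤ → A)) : Prop :=
  IsSubshift X ∧ X.Nonempty ∧ ∀ x ∈ X, X ⊆ closure {z | ∃ k : ℤ, z = shiftBy k x}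

/-- `X` is the smallest subshift containing `τ(Y)`. -/
def IsSmallestSubshiftContaining [TopologicalSpace B] (τ : A → List B)
    (Y : Set (ℤ → A)) (X : Set (ℤ → B)) : Prop :=
  IsSubshift X ∧ (∀ y ∈ Y, ∀ z, IsSeqImage τ y z → z ∈ X) ∧
    ∀ X' : Set (ℤ → B), IsSubshift X' → (∀ y ∈ Y, ∀ z, IsSeqImage τ y z → z ∈ X') → X ⊆ X'

/-- The language of a subshift. -/
def langOf (X : Set (ℤ → A)) : Set (List A) :=
  {w | ∃ x ∈ X, ∃ m : ℤ, factorAt x m w.length = w}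

/-- The complexity function of a subshift. -/
noncomputable def complexity (X : Set (ℤ → A)) (n : ℕ) : ℕ :=
  Set.ncard {w : List A | w.length = n ∧ w ∈ langOf X}

/-- `‖τ‖`, the maximal length of the image of a letter. -/
noncomputable def normSup (τ : A → List B) : ℕ := sSup (Set.range fun a => (τ a).length)

/-- `⟨τ⟩`, the minimal length of the image of a letter. -/
noncomputable def normInf (τ : A → List B) : ℕ := sInf (Set.range fun a => (τ a).length)

/-- The language of `θ(A^ℤ)`: finite words occurring in two-sided images under `θ`. -/
def morphLang (θ : A → List C) : Set (List C) :=
  {w | ∃ (x : ℤ → A) (z : ℤ → C) (m : ℤ), IsSeqImage θ x z ∧ factorAt z m w.length = w}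

/-- `p_{θ(A^ℤ)}(n)`: number of words of length `n` occurring in two-sided images under `θ`. -/
noncomputable def morphComplexity (θ : A → List C) (n : ℕ) : ℕ :=
  Set.ncard {w : List C | w.length = n ∧ w ∈ morphLang θ}

/-- The set `F(b, n, σ, L)` of right extensions of `b` in `L`. -/
def Fset (σ : B → List C) (b : B) (n : ℕ) (L : Set (List B)) : Set (List B) :=
  {w | w ∈ L ∧ (b :: w) ∈ L ∧ w.head? ≠ some b ∧
    (wordImage σ w.dropLast).length < n ∧ n ≤ (wordImage σ w).length}

/-- `τ(A^i)`: images under `τ` of words of length `i`. -/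
def imagesOfLen (τ : A → List B) (i : ℕ) : Set (List B) :=
  {w | ∃ u : List A, u.length = i ∧ wordImage τ u = w}

/-- `Comp_i(σ|τ)(n)`, the `i`-th complexity of `σ` with respect to `τ`. -/
noncomputable def relCompI [Fintype B] (σ : B → List C) (τ : A → List B) (i n : ℕ) : ℕ :=
  ∑ b : B, (Fset σ b n (imagesOfLen τ i)).ncard

/-- `Comp(σ|τ)(n)`, the complexity of `σ` with respect to `τ`. -/
noncomputable def relComp [Fintype B] (σ : B → List C) (τ : A → List B) (n : ℕ) : ℕ :=
  ∑ b : B, (Fset σ b n (morphLang τ)).ncard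

/-- Number of maximal blocks of a single repeated letter in a word. -/
def blockCount [DecidableEq B] : List B → ℕ
  | [] => 0
  | [_] => 1
  | a :: b :: l => (if a = b then 0 else 1) + blockCount (b :: l)

/-- The repetition complexity `r-comp(τ)` of a morphism. -/
noncomputable def rcomp [Fintype A] [DecidableEq B] (τ : A → List B) : ℕ :=
  ∑ a : A, blockCount (τ a)

/-- Two two-sided sequences are left asymptotic. -/
def LeftAsymptotic (x y : ℤ → A) : Prop :=
  ∃ N : ℕ, ∀ k : ℕ, N ≤ k → x (-(k : ℤ)) = y (-(k : ℤ))

/-- The shift orbits of `x` and `y` are asymptotic. -/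
def OrbitsAsymptotic (x y : ℤ → A) : Prop :=
  ∃ k k' : ℤ, LeftAsymptotic (shiftBy k x) (shiftBy k' y)

/-- A finite set `W` of non-empty words is recognizable in the subshift `X`. -/
def WordSetRecognizable [TopologicalSpace B] (W : Set (List B)) (X : Set (ℤ → B)) : Prop :=
  ∃ (A' : Type) (_ : Fintype A') (Y : Set (ℤ → A')) (τ : A' → List B),
    Set.range τ = W ∧ NonErasing τ ∧ (@IsSubshift A' ⊥ Y) ∧
    IsSmallestSubshiftContaining τ Y X ∧ RecognizableIn τ Y

end Defs

section Seq

variable {A : ℕ → Type*}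

/-- `τ_{[0,n]} = τ_0 ∘ τ_1 ∘ ⋯ ∘ τ_n`. -/
def compSeq (τ : ∀ n, A (n+1) → List (A n)) : ∀ n, A (n+1) → List (A 0)
  | 0 => τ 0
  | n+1 => fun a => wordImage (compSeq τ n) (τ (n+1) a)

/-- `τ_{[n, n+k]} = τ_n ∘ ⋯ ∘ τ_{n+k}`. -/
def compFrom (τ : ∀ n, A (n+1) → List (A n)) (n : ℕ) : ∀ k, A (n+k+1) → List (A n)
  | 0 => τ n
  | k+1 => fun a => wordImage (compFrom τ n k) (τ (n+k+1) a)

/-- The S-adic subshift generated by the directive sequence `τ`. -/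
def sadicSubshift (τ : ∀ n, A (n+1) → List (A n)) : Set (ℤ → A 0) :=
  {x | ∀ (m : ℤ) (len : ℕ), ∃ (n : ℕ) (a : A (n+1)), factorAt x m len <:+: compSeq τ n a}

/-- The level-`n` subshift `X_τ^{(n)}` of the directive sequence `τ`. -/
def levelSubshift (τ : ∀ n, A (n+1) → List (A n)) (n : ℕ) : Set (ℤ → A n) :=
  {x | ∀ (m : ℤ) (len : ℕ), ∃ (k : ℕ) (a : A (n+k+1)), factorAt x m len <:+: compFrom τ n k a}

end Seq


section AuxLemmas

variable {A B C : Type*}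



lemma shiftBy_shiftBy (a b : ℤ) (x : ℤ → A) : shiftBy a (shiftBy b x) = shiftBy (a + b) x := by
  funext n; simp [shiftBy, add_assoc]

lemma shiftBy_zero (x : ℤ → A) : shiftBy 0 x = x := by
  funext n; simp [shiftBy]

lemma cumLen_zero (τ : A → List B) (y : ℤ → A) : cumLen τ y 0 = 0 := by simp [cumLen]

lemma cumLen_succ (τ : A → List B) (y : ℤ → A) (n : ℤ) :
    cumLen τ y (n + 1) = cumLen τ y n + ((τ (y n)).length : ℤ) := by
  rcases le_or_gt 0 n with h | h
  · rw [cumLen, cumLen, if_pos (by omega), if_pos h,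
      show (n+1).toNat = n.toNat + 1 by omega, Finset.sum_range_succ,
      Int.toNat_of_nonneg h]
  · have hn1 : n + 1 ≤ 0 := by omega
    have hM : (-n).toNat = (-(n+1)).toNat + 1 := by omega
    rw [cumLen, cumLen, if_neg (by omega : ¬ 0 ≤ n), hM, Finset.sum_range_succ,
      show -(((-(n+1)).toNat : ℤ)) - 1 = n by omega]
    rcases eq_or_lt_of_le hn1 with h1 | h1
    · rw [if_pos (by omega), show (n+1).toNat = 0 by omega,
        show (-(n+1)).toNat = 0 by omega]
      simp
    · rw [if_neg (by omega)]
      ring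

lemma one_le_len {τ : A → List B} (hτ : NonErasing τ) (a : A) :
    1 ≤ ((τ a).length : ℤ) := by
  have := List.length_pos_iff.mpr (hτ a); omega

lemma cumLen_add_le {τ : A → List B} (hτ : NonErasing τ) (y : ℤ → A) (n : ℤ) (d : ℕ) :
    cumLen τ y n + d ≤ cumLen τ y (n + d) := by
  induction d with
  | zero => simp
  | succ d ih =>
    have h1 := cumLen_succ τ y (n + d)
    have h2 := one_le_len hτ (y (n + d))
    have e : n + ((d : ℤ) + 1) = (n + d) + 1 := by ring
    push_cast
    rw [e, h1]
    push_cast at ih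
    omega

lemma cumLen_mono {τ : A → List B} (hτ : NonErasing τ) (y : ℤ → A) {n m : ℤ} (h : n ≤ m) :
    cumLen τ y n ≤ cumLen τ y m := by
  have h1 := cumLen_add_le hτ y n (m - n).toNat
  rw [show n + ((m - n).toNat : ℤ) = m by omega] at h1
  omega

lemma cumLen_strict {τ : A → List B} (hτ : NonErasing τ) (y : ℤ → A) {n m : ℤ} (h : n < m) :
    cumLen τ y n + (m - n) ≤ cumLen τ y m := by
  have h1 := cumLen_add_le hτ y n (m - n).toNat
  rw [show n + ((m - n).toNat : ℤ) = m by omega] at h1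
  omega

lemma le_cumLen_of_nonneg {τ : A → List B} (hτ : NonErasing τ) (y : ℤ → A) {n : ℤ} (h : 0 ≤ n) :
    n ≤ cumLen τ y n := by
  have h1 := cumLen_add_le hτ y 0 n.toNat
  rw [cumLen_zero] at h1
  rw [show (0 : ℤ) + (n.toNat : ℤ) = n by omega] at h1
  omega

lemma cumLen_le_of_nonpos {τ : A → List B} (hτ : NonErasing τ) (y : ℤ → A) {n : ℤ} (h : n ≤ 0) :
    cumLen τ y n ≤ n := by
  have h1 := cumLen_add_le hτ y n (-n).toNat
  rw [show n + (((-n).toNat : ℕ) : ℤ) = 0 by omega, cumLen_zero] at h1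
  omega

lemma exists_idx {τ : A → List B} (hτ : NonErasing τ) (y : ℤ → A) (m : ℤ) :
    ∃ n : ℤ, cumLen τ y n ≤ m ∧ m < cumLen τ y (n + 1) := by
  classical
  set m0 : ℤ := -(m.natAbs : ℤ) - 1 with hm0
  have hm0le : cumLen τ y m0 ≤ m := by
    have := cumLen_le_of_nonpos hτ y (show m0 ≤ 0 by omega)
    omega
  have hex : ∃ d : ℕ, m < cumLen τ y (m0 + d + 1) := by
    refine ⟨(m - cumLen τ y m0).toNat, ?_⟩
    have h1 := cumLen_add_le hτ y m0 ((m - cumLen τ y m0).toNat + 1)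
    rw [show m0 + (((m - cumLen τ y m0).toNat + 1 : ℕ) : ℤ)
        = m0 + ((m - cumLen τ y m0).toNat : ℤ) + 1 by push_cast; ring] at h1
    omega
  refine ⟨m0 + Nat.find hex, ?_, Nat.find_spec hex⟩
  rcases Nat.eq_zero_or_pos (Nat.find hex) with h0 | h0
  · rw [h0]; simpa using hm0le
  · have hmin := Nat.find_min hex (show Nat.find hex - 1 < Nat.find hex by omega)
    rw [show m0 + ((Nat.find hex - 1 : ℕ) : ℤ) + 1 = m0 + (Nat.find hex : ℤ) by omega] at hmin
    omega

lemma idx_unique {τ : A → List B} (hτ : NonErasing τ) (y : ℤ → A) {n n' m : ℤ}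
    (h1 : cumLen τ y n ≤ m) (h2 : m < cumLen τ y (n + 1))
    (h3 : cumLen τ y n' ≤ m) (h4 : m < cumLen τ y (n' + 1)) : n = n' := by
  rcases lt_trichotomy n n' with h | h | h
  · have := cumLen_mono hτ y (show n + 1 ≤ n' by omega); omega
  · exact h
  · have := cumLen_mono hτ y (show n' + 1 ≤ n by omega); omega



lemma isSeqImage_iff [Inhabited B] (τ : A → List B) (y : ℤ → A) (z : ℤ → B) :
    IsSeqImage τ y z ↔ ∀ (n : ℤ) (j : ℕ), j < (τ (y n)).length →
      z (cumLen τ y n + (j : ℤ)) = (τ (y n)).getD j default := by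
  constructor
  · intro h n j hj
    have := h n ⟨j, hj⟩
    rw [List.getD_eq_getElem _ _ hj]
    exact this
  · intro h n j
    have := h n j j.2
    rw [List.getD_eq_getElem _ _ j.2] at this
    exact this

lemma seqImage_at [Inhabited B] {τ : A → List B} {y : ℤ → A} {z : ℤ → B}
    (h : IsSeqImage τ y z) {n m : ℤ}
    (h1 : cumLen τ y n ≤ m) (h2 : m < cumLen τ y (n + 1)) :
    z m = (τ (y n)).getD (m - cumLen τ y n).toNat default := by
  have hs := cumLen_succ τ y n
  have hj : (m - cumLen τ y n).toNat < (τ (y n)).length := by omega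
  have := (isSeqImage_iff τ y z).mp h n _ hj
  rw [show cumLen τ y n + (((m - cumLen τ y n).toNat : ℕ) : ℤ) = m by omega] at this
  exact this

lemma seqImage_unique [Inhabited B] {τ : A → List B} (hτ : NonErasing τ) {y : ℤ → A}
    {z z' : ℤ → B} (h : IsSeqImage τ y z) (h' : IsSeqImage τ y z') : z = z' := by
  funext m
  obtain ⟨n, h1, h2⟩ := exists_idx hτ y m
  rw [seqImage_at h h1 h2, seqImage_at h' h1 h2]

noncomputable def seqIdx {τ : A → List B} (hτ : NonErasing τ) (y : ℤ → A) (m : ℤ) : ℤ :=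
  (exists_idx hτ y m).choose

lemma seqIdx_spec {τ : A → List B} (hτ : NonErasing τ) (y : ℤ → A) (m : ℤ) :
    cumLen τ y (seqIdx hτ y m) ≤ m ∧ m < cumLen τ y (seqIdx hτ y m + 1) :=
  (exists_idx hτ y m).choose_spec

noncomputable def seqImg [Inhabited B] {τ : A → List B} (hτ : NonErasing τ) (y : ℤ → A) :
    ℤ → B := fun m =>
  (τ (y (seqIdx hτ y m))).getD (m - cumLen τ y (seqIdx hτ y m)).toNat default

lemma isSeqImage_seqImg [Inhabited B] {τ : A → List B} (hτ : NonErasing τ) (y : ℤ → A) :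
    IsSeqImage τ y (seqImg hτ y) := by
  rw [isSeqImage_iff]
  intro n j hj
  set m := cumLen τ y n + (j : ℤ) with hm
  have hs := cumLen_succ τ y n
  have h1 : cumLen τ y n ≤ m := by omega
  have h2 : m < cumLen τ y (n + 1) := by omega
  have hspec := seqIdx_spec hτ y m
  have hn : seqIdx hτ y m = n := idx_unique hτ y hspec.1 hspec.2 h1 h2
  rw [seqImg, hn, show (m - cumLen τ y n).toNat = j by omega]

lemma cumLen_congr {τ : A → List B} {y y' : ℤ → A} (n : ℤ)
    (h : ∀ i : ℤ, min n 0 ≤ i → i < max n 0 → y i = y' i) :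
    cumLen τ y n = cumLen τ y' n := by
  rcases le_or_gt 0 n with hn | hn
  · rw [cumLen, cumLen, if_pos hn, if_pos hn]
    refine Finset.sum_congr rfl fun i hi => ?_
    rw [Finset.mem_range] at hi
    rw [h i (by omega) (by omega)]
  · rw [cumLen, cumLen, if_neg (by omega), if_neg (by omega)]
    refine congrArg _ (Finset.sum_congr rfl fun i hi => ?_)
    rw [Finset.mem_range] at hi
    rw [h (-(i : ℤ) - 1) (by omega) (by omega)]

lemma seqImage_local [Inhabited B] {τ : A → List B} (hτ : NonErasing τ) {y y' : ℤ → A}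
    {z z' : ℤ → B} (hz : IsSeqImage τ y z) (hz' : IsSeqImage τ y' z') (m : ℤ)
    (h : ∀ i : ℤ, -(m.natAbs : ℤ) ≤ i → i ≤ (m.natAbs : ℤ) → y i = y' i) : z m = z' m := by
  obtain ⟨n, h1, h2⟩ := exists_idx hτ y m
  have hlow : -(m.natAbs : ℤ) ≤ n := by
    rcases le_or_gt 0 m with hm | hm
    · by_contra hc
      have : cumLen τ y (n + 1) ≤ n + 1 := cumLen_le_of_nonpos hτ y (by omega)
      omega
    · have hne : n + 1 ≤ 0 := by
        by_contra hc
        have := le_cumLen_of_nonneg hτ y (show (0:ℤ) ≤ n by omega)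
        omega
      have := cumLen_le_of_nonpos hτ y hne
      omega
  have hhigh : n ≤ (m.natAbs : ℤ) := by
    rcases le_or_gt 0 m with hm | hm
    · rcases le_or_gt 0 n with hn | hn
      · have := le_cumLen_of_nonneg hτ y hn; omega
      · omega
    · by_contra hc
      have := le_cumLen_of_nonneg hτ y (show (0:ℤ) ≤ n by omega)
      omega
  have hyn : y n = y' n := h n hlow (by omega)
  have hcum : cumLen τ y n = cumLen τ y' n :=
    cumLen_congr n (fun i hi1 hi2 => h i (by omega) (by omega))
  have h1' : cumLen τ y' n ≤ m := by omega
  have h2' : m < cumLen τ y' (n + 1) := by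
    have e1 := cumLen_succ τ y n
    have e2 := cumLen_succ τ y' n
    rw [← hyn] at e2
    omega
  rw [seqImage_at hz h1 h2, seqImage_at hz' h1' h2', hcum, hyn]



lemma cumLen_shift (τ : A → List B) (y : ℤ → A) (d : ℤ) (n : ℤ) :
    cumLen τ (shiftBy d y) n = cumLen τ y (n + d) - cumLen τ y d := by
  induction n using Int.induction_on with
  | zero => simp [cumLen_zero]
  | succ k ih =>
    have e1 := cumLen_succ τ (shiftBy d y) (k : ℤ)
    have e2 := cumLen_succ τ y ((k : ℤ) + d)
    have harg : (shiftBy d y) (k : ℤ) = y ((k : ℤ) + d) := rfl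
    rw [harg] at e1
    rw [show ((k : ℤ) + 1 + d) = ((k : ℤ) + d) + 1 by ring]
    omega
  | pred k ih =>
    have e1 := cumLen_succ τ (shiftBy d y) (-(k : ℤ) - 1)
    have e2 := cumLen_succ τ y (-(k : ℤ) - 1 + d)
    have harg : (shiftBy d y) (-(k : ℤ) - 1) = y (-(k : ℤ) - 1 + d) := rfl
    rw [harg] at e1
    rw [show (-(k : ℤ) - 1 + 1) = -(k : ℤ) by ring] at e1
    rw [show (-(k : ℤ) - 1 + d + 1) = -(k : ℤ) + d by ring] at e2
    omega

lemma isSeqImage_shift {τ : A → List B} {y : ℤ → A} {z : ℤ → B}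
    (h : IsSeqImage τ y z) (d : ℤ) :
    IsSeqImage τ (shiftBy d y) (shiftBy (cumLen τ y d) z) := by
  intro n j
  have hc := cumLen_shift τ y d n
  show z (cumLen τ (shiftBy d y) n + ((j : ℕ) : ℤ) + cumLen τ y d) = _
  rw [show cumLen τ (shiftBy d y) n + ((j : ℕ) : ℤ) + cumLen τ y d
      = cumLen τ y (n + d) + ((j : ℕ) : ℤ) by omega]
  exact h (n + d) j

lemma wordImage_nil (σ : B → List C) : wordImage σ ([] : List B) = [] := rfl

lemma wordImage_cons (σ : B → List C) (b : B) (w : List B) :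
    wordImage σ (b :: w) = σ b ++ wordImage σ w := by
  simp [wordImage]

lemma wordImage_append (σ : B → List C) (u v : List B) :
    wordImage σ (u ++ v) = wordImage σ u ++ wordImage σ v := by
  simp [wordImage]

lemma get_decomp [Inhabited B] [Inhabited C] (σ : B → List C) :
    ∀ (w : List B) (j : ℕ), j < (wordImage σ w).length →
    ∃ i : ℕ, i < w.length ∧ ∃ j' : ℕ, j' < (σ (w.getD i default)).length ∧
      j = (wordImage σ (w.take i)).length + j' ∧
      (wordImage σ w).getD j default = (σ (w.getD i default)).getD j' default := by
  intro w
  induction w with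
  | nil => intro j hj; simp [wordImage] at hj
  | cons b w ih =>
    intro j hj
    rw [wordImage_cons] at hj
    rcases lt_or_ge j (σ b).length with h | h
    · refine ⟨0, by simp, j, by simpa using h, by simp [wordImage], ?_⟩
      rw [wordImage_cons]
      rw [List.getD_eq_getElem _ _ (by simpa using hj), List.getD_eq_getElem _ _ (by simpa using h)]
      simp [List.getElem_append_left h]
    · rw [List.length_append] at hj
      obtain ⟨i, hi, j', hj', hsum, hval⟩ := ih (j - (σ b).length) (by omega)
      refine ⟨i + 1, by simpa using hi, j', by simpa using hj', ?_, ?_⟩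
      · rw [List.take_succ_cons, wordImage_cons, List.length_append]
        omega
      · rw [wordImage_cons, List.getD_cons_succ]
        rw [List.getD_eq_getElem _ _ (show j < ((σ b) ++ wordImage σ w).length by
          rw [List.length_append]; omega)]
        rw [List.getElem_append_right (by omega)]
        rw [List.getD_eq_getElem _ _ (by omega)] at hval
        rw [← hval]



/-- If `z` spells out `w` starting at position `p`, then `cumLen σ z` advances by the length
of the `σ`-image of `w` over that stretch. -/
lemma cumLen_add_list [Inhabited B] (σ : B → List C) (z : ℤ → B) (w : List B) (p : ℤ)
    (hw : ∀ j : ℕ, j < w.length → z (p + (j : ℤ)) = w.getD j default) :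
    cumLen σ z (p + (w.length : ℤ)) = cumLen σ z p + ((wordImage σ w).length : ℤ) := by
  induction w using List.reverseRecOn with
  | nil => simp [wordImage]
  | append_singleton w b ih =>
    have hlen : ((w ++ [b]).length : ℤ) = (w.length : ℤ) + 1 := by simp
    have hz : z (p + (w.length : ℤ)) = b := by
      have h0 := hw w.length (by simp)
      rw [List.getD_eq_getElem _ _ (by simp),
        List.getElem_append_right (Nat.le_refl _)] at h0
      simpa using h0
    have e1 := cumLen_succ σ z (p + (w.length : ℤ))
    rw [hz] at e1
    have e2 : cumLen σ z (p + (w.length : ℤ)) = cumLen σ z p + ((wordImage σ w).length : ℤ) := by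
      apply ih
      intro j hj
      rw [hw j (by simp; omega), List.getD_eq_getElem _ _ (by simp; omega),
        List.getD_eq_getElem _ _ hj, List.getElem_append_left hj]
    rw [hlen, show p + ((w.length : ℤ) + 1) = (p + (w.length : ℤ)) + 1 by ring, e1, e2,
      wordImage_append]
    have : (wordImage σ [b]).length = (σ b).length := by simp [wordImage]
    rw [List.length_append, this]
    push_cast
    ring

lemma cumLen_comp [Inhabited B] (σ : B → List C) (τ : A → List B) {y : ℤ → A} {z : ℤ → B}
    (hz : IsSeqImage τ y z) (n : ℤ) :
    cumLen (morphComp σ τ) y n = cumLen σ z (cumLen τ y n) := by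
  have key : ∀ q : ℤ, cumLen σ z (cumLen τ y (q + 1)) =
      cumLen σ z (cumLen τ y q) + ((wordImage σ (τ (y q))).length : ℤ) := by
    intro q
    rw [cumLen_succ τ y q]
    exact cumLen_add_list σ z (τ (y q)) (cumLen τ y q)
      (fun j hj => (isSeqImage_iff τ y z).mp hz q j hj)
  induction n using Int.induction_on with
  | zero => simp [cumLen_zero]
  | succ k ih =>
    have e1 := cumLen_succ (morphComp σ τ) y (k : ℤ)
    have e2 := key (k : ℤ)
    have : ((morphComp σ τ (y (k : ℤ))).length : ℤ) = ((wordImage σ (τ (y (k : ℤ)))).length : ℤ) := rfl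
    omega
  | pred k ih =>
    have e1 := cumLen_succ (morphComp σ τ) y (-(k : ℤ) - 1)
    have e2 := key (-(k : ℤ) - 1)
    rw [show (-(k : ℤ) - 1 + 1) = -(k : ℤ) by ring] at e1 e2
    have : ((morphComp σ τ (y (-(k : ℤ) - 1))).length : ℤ)
        = ((wordImage σ (τ (y (-(k : ℤ) - 1)))).length : ℤ) := rfl
    omega

lemma isSeqImage_comp [Inhabited B] [Inhabited C] {σ : B → List C} {τ : A → List B}
    {y : ℤ → A} {z : ℤ → B} {v : ℤ → C}
    (hz : IsSeqImage τ y z) (hv : IsSeqImage σ z v) :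
    IsSeqImage (morphComp σ τ) y v := by
  rw [isSeqImage_iff]
  intro n j hj
  have hj' : j < (wordImage σ (τ (y n))).length := hj
  obtain ⟨i, hi, j', hj', hsum, hval⟩ := get_decomp σ (τ (y n)) j hj'
  have hzi : z (cumLen τ y n + (i : ℤ)) = (τ (y n)).getD i default :=
    (isSeqImage_iff τ y z).mp hz n i hi
  have htake : cumLen σ z (cumLen τ y n + (i : ℤ)) =
      cumLen σ z (cumLen τ y n) + ((wordImage σ ((τ (y n)).take i)).length : ℤ) := by
    have hlen : (((τ (y n)).take i).length : ℤ) = (i : ℤ) := by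
      simp [List.length_take]; omega
    rw [← hlen]
    apply cumLen_add_list
    intro j0 hj0
    rw [List.length_take] at hj0
    have hb : j0 < (τ (y n)).length := by omega
    rw [(isSeqImage_iff τ y z).mp hz n j0 hb,
      List.getD_eq_getElem ((τ (y n)).take i) _ (by rw [List.length_take]; omega),
      List.getElem_take, List.getD_eq_getElem _ _ hb]
  have hcum := cumLen_comp σ τ hz n
  have hstep : v (cumLen σ z (cumLen τ y n + (i : ℤ)) + (j' : ℤ))
      = (σ (z (cumLen τ y n + (i : ℤ)))).getD j' default := by
    apply (isSeqImage_iff σ z v).mp hv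
    rw [hzi]; exact hj'
  rw [show cumLen (morphComp σ τ) y n + (j : ℤ)
      = cumLen σ z (cumLen τ y n + (i : ℤ)) + (j' : ℤ) by
    rw [htake, hcum, hsum]; push_cast; ring]
  rw [hstep, hzi]
  exact hval.symm



lemma continuous_seqImg [Nonempty A] [Inhabited B] [TopologicalSpace A] [DiscreteTopology A]
    [TopologicalSpace B] {τ : A → List B} (hτ : NonErasing τ) (m : ℤ) :
    Continuous fun y : ℤ → A => seqImg hτ y m := by
  classical
  set W : Finset ℤ := Finset.Icc (-(m.natAbs : ℤ)) (m.natAbs : ℤ) with hW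
  obtain ⟨F, hFspec⟩ : ∃ F : (↥W → A) → B, ∀ u : ↥W → A,
      F u = seqImg hτ (fun i => if h : i ∈ W then u ⟨i, h⟩ else Classical.arbitrary A) m :=
    ⟨_, fun _ => rfl⟩
  have key : ∀ y : ℤ → A, seqImg hτ y m = F (fun i => y (i : ℤ)) := by
    intro y
    rw [hFspec]
    apply seqImage_local hτ (isSeqImage_seqImg hτ y) (isSeqImage_seqImg hτ _) m
    intro i h1 h2
    have hi : i ∈ W := by rw [hW, Finset.mem_Icc]; exact ⟨h1, h2⟩
    simp [hi]
  have heq : (fun y : ℤ → A => seqImg hτ y m) = fun y => F (fun i : ↥W => y (i : ℤ)) :=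
    funext key
  rw [heq]
  have hFc : Continuous F := continuous_of_discreteTopology
  exact hFc.comp (continuous_pi fun i : ↥W => continuous_apply (i : ℤ))

/-- The set of points admitting a centered `τ`-representation in `Y`. -/
def repSet (τ : A → List B) (Y : Set (ℤ → A)) : Set (ℤ → B) :=
  {x | ∃ (k : ℕ) (y : ℤ → A), IsCenteredRep τ Y x k y}

lemma repSet_isClosed [Nonempty A] [Inhabited B] [Fintype A]
    [TopologicalSpace A] [DiscreteTopology A] [TopologicalSpace B] [DiscreteTopology B]
    {τ : A → List B} (hτ : NonErasing τ) {Y : Set (ℤ → A)} (hY : IsSubshift Y) :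
    IsClosed (repSet τ Y) := by
  classical
  set K : ℕ := Finset.univ.sup (fun a : A => (τ a).length) with hK
  have hrep : repSet τ Y = ⋃ k ∈ Finset.range K,
      (fun y : ℤ → A => shiftBy (k : ℤ) (seqImg hτ y)) ''
        {y | y ∈ Y ∧ k < (τ (y 0)).length} := by
    ext x
    simp only [repSet, Set.mem_setOf_eq, Set.mem_iUnion, Set.mem_image, Finset.mem_range]
    constructor
    · rintro ⟨k, y, hy, hk, z, hz, hx⟩
      refine ⟨k, lt_of_lt_of_le hk (by
        rw [hK]
        exact Finset.le_sup (f := fun a : A => (τ a).length) (Finset.mem_univ (y 0))),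
        y, ⟨hy, hk⟩, ?_⟩
      rw [hx, seqImage_unique hτ hz (isSeqImage_seqImg hτ y)]
    · rintro ⟨k, hkK, y, ⟨hy, hk⟩, hx⟩
      exact ⟨k, y, hy, hk, seqImg hτ y, isSeqImage_seqImg hτ y, hx.symm⟩
  rw [hrep]
  apply Set.Finite.isClosed_biUnion (Finset.range K).finite_toSet
  intro k _
  have hcont : Continuous fun y : ℤ → A => shiftBy (k : ℤ) (seqImg hτ y) :=
    continuous_pi fun n => continuous_seqImg hτ (n + k)
  have hcomp : IsCompact {y : ℤ → A | y ∈ Y ∧ k < (τ (y 0)).length} := by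
    apply IsClosed.isCompact
    apply IsClosed.inter hY.1
    have e : IsClosed ((fun y : ℤ → A => y 0) ⁻¹' {a : A | k < (τ a).length}) :=
      (isClosed_discrete _).preimage (continuous_apply 0)
    exact e
  exact (hcomp.image hcont).isClosed

lemma repSet_shift [TopologicalSpace A] {τ : A → List B} (hτ : NonErasing τ)
    {Y : Set (ℤ → A)} (hY : IsSubshift Y) (d : ℤ) {x : ℤ → B} (hx : x ∈ repSet τ Y) :
    shiftBy d x ∈ repSet τ Y := by
  have step1 : ∀ x ∈ repSet τ Y, shiftBy 1 x ∈ repSet τ Y := by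
    rintro x ⟨k, y, hy, hk, z, hz, hx⟩
    rcases lt_or_ge (k + 1) ((τ (y 0)).length) with h | h
    · refine ⟨k + 1, y, hy, h, z, hz, ?_⟩
      rw [hx, shiftBy_shiftBy, show (1 : ℤ) + (k : ℤ) = (((k + 1 : ℕ)) : ℤ) by push_cast; ring]
    · have hk1 : (k : ℤ) + 1 = ((τ (y 0)).length : ℤ) := by omega
      have hc1 : cumLen τ y 1 = ((τ (y 0)).length : ℤ) := by
        have h := cumLen_succ τ y 0
        rw [zero_add, cumLen_zero, zero_add] at h
        exact h
      refine ⟨0, shiftBy 1 y, hY.2 1 y hy, ?_, shiftBy (cumLen τ y 1) z,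
        isSeqImage_shift hz 1, ?_⟩
      · have e : (shiftBy 1 y) 0 = y 1 := by simp [shiftBy]
        rw [e]
        exact List.length_pos_iff.mpr (hτ (y 1))
      · rw [hx, shiftBy_shiftBy, shiftBy_shiftBy, hc1,
          show (1 : ℤ) + (k : ℤ) = (((0 : ℕ)) : ℤ) + ((τ (y 0)).length : ℤ) by omega]
  have stepm1 : ∀ x ∈ repSet τ Y, shiftBy (-1) x ∈ repSet τ Y := by
    rintro x ⟨k, y, hy, hk, z, hz, hx⟩
    rcases Nat.eq_zero_or_pos k with h0 | h0
    · set L : ℕ := (τ (y (-1))).length with hL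
      have hL1 : 1 ≤ L := List.length_pos_iff.mpr (hτ (y (-1)))
      have hcm1 : cumLen τ y (-1) = -(L : ℤ) := by
        have h := cumLen_succ τ y (-1)
        rw [show (-1 : ℤ) + 1 = 0 by ring, cumLen_zero] at h
        omega
      refine ⟨L - 1, shiftBy (-1) y, hY.2 (-1) y hy, ?_, shiftBy (cumLen τ y (-1)) z,
        isSeqImage_shift hz (-1), ?_⟩
      · have e : (shiftBy (-1) y) 0 = y (-1) := by simp [shiftBy]
        rw [e, ← hL]; omega
      · rw [hx, shiftBy_shiftBy, shiftBy_shiftBy, hcm1,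
          show (-1 : ℤ) + (k : ℤ) = (((L - 1 : ℕ)) : ℤ) + -(L : ℤ) by omega]
    · refine ⟨k - 1, y, hy, by omega, z, hz, ?_⟩
      rw [hx, shiftBy_shiftBy, show (-1 : ℤ) + (k : ℤ) = (((k - 1 : ℕ)) : ℤ) by omega]
  induction d using Int.induction_on with
  | zero => rwa [shiftBy_zero]
  | succ k ih =>
    rw [show ((k : ℤ) + 1) = 1 + (k : ℤ) by ring, ← shiftBy_shiftBy]
    exact step1 _ ih
  | pred k ih =>
    rw [show (-(k : ℤ) - 1) = -1 + -(k : ℤ) by ring, ← shiftBy_shiftBy]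
    exact stepm1 _ ih

lemma mem_repSet_of_mem_X [Nonempty A] [Inhabited B] [Fintype A]
    [TopologicalSpace A] [DiscreteTopology A] [TopologicalSpace B] [DiscreteTopology B]
    {τ : A → List B} (hτ : NonErasing τ) {Y : Set (ℤ → A)} (hY : IsSubshift Y)
    {X : Set (ℤ → B)} (hX : IsSmallestSubshiftContaining τ Y X) :
    ∀ x ∈ X, x ∈ repSet τ Y := by
  intro x hx
  refine hX.2.2 (repSet τ Y) ⟨repSet_isClosed hτ hY, fun d x hx => repSet_shift hτ hY d hx⟩
    (fun y hy z hz => ?_) hx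
  exact ⟨0, y, hy, List.length_pos_iff.mpr (hτ (y 0)), z, hz, by rw [Int.natCast_zero, shiftBy_zero]⟩

end AuxLemmas

/-- recognizability of a composition of morphisms (Lemma 3.5 of BSTY). -/
theorem stmt4 {A B C : Type*} [Fintype A] [Fintype B] [Fintype C]
    [TopologicalSpace A] [DiscreteTopology A] [TopologicalSpace B] [DiscreteTopology B]
    (τ : A → List B) (σ : B → List C) (hτ : NonErasing τ) (hσ : NonErasing σ)
    (Y : Set (ℤ → A)) (hY : IsSubshift Y)
    (X : Set (ℤ → B)) (hX : IsSmallestSubshiftContaining τ Y X) :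
    RecognizableIn (morphComp σ τ) Y ↔ (RecognizableIn τ Y ∧ RecognizableIn σ X) := by
  classical
  rcases isEmpty_or_nonempty A with hA | hA
  · -- degenerate case: no letters, everything is vacuous
    have hXempty : ∀ x ∈ X, False := by
      intro x hx
      have h1 : IsSubshift (∅ : Set (ℤ → B)) := ⟨isClosed_empty, by simp⟩
      exact hX.2.2 ∅ h1 (fun y hy => (IsEmpty.false (y 0)).elim) hx
    constructor
    · intro _
      constructor
      · intro x k k' y y' h h'
        exact (IsEmpty.false (y 0)).elim
      · intro u j j' x x' h h'
        exact (hXempty x h.1).elim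
    · intro _ x k k' y y' h h'
      exact (IsEmpty.false (y 0)).elim
  · obtain ⟨a0⟩ := hA
    haveI : Nonempty A := ⟨a0⟩
    have hb : ∃ b, b ∈ τ a0 := List.exists_mem_of_ne_nil _ (hτ a0)
    haveI : Inhabited B := ⟨hb.choose⟩
    have hc : ∃ c, c ∈ σ default := List.exists_mem_of_ne_nil _ (hσ default)
    haveI : Inhabited C := ⟨hc.choose⟩
    have hθne : NonErasing (morphComp σ τ) := by
      intro a h
      obtain ⟨b, w, hbw⟩ : ∃ b w, τ a = b :: w := by
        cases hτa : τ a with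
        | nil => exact absurd hτa (hτ a)
        | cons b w => exact ⟨b, w, rfl⟩
      simp only [morphComp, hbw, wordImage_cons, List.append_eq_nil_iff] at h
      exact hσ b h.1
    have lenθ : ∀ (y : ℤ → A) (z : ℤ → B), IsSeqImage τ y z →
        cumLen σ z (((τ (y 0)).length : ℕ) : ℤ) = ((morphComp σ τ (y 0)).length : ℤ) := by
      intro y z hz
      have h := cumLen_add_list σ z (τ (y 0)) 0 (fun j hj => by
        have h2 := (isSeqImage_iff τ y z).mp hz 0 j hj
        rwa [cumLen_zero] at h2)
      rw [zero_add, cumLen_zero, zero_add] at h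
      exact h
    constructor
    · intro hrecθ
      constructor
      · -- τ recognizable in Y
        rintro x k k' y y' ⟨hy, hk, z, hz, hxz⟩ ⟨hy', hk', z', hz', hxz'⟩
        have hux : IsSeqImage σ x (seqImg hσ x) := isSeqImage_seqImg hσ x
        have mkrep : ∀ (k : ℕ) (y : ℤ → A) (z : ℤ → B), y ∈ Y → k < (τ (y 0)).length →
            x = shiftBy (k : ℤ) z → IsSeqImage τ y z →
            IsCenteredRep (morphComp σ τ) Y (seqImg hσ x) (cumLen σ z (k : ℤ)).toNat y ∧
            ((cumLen σ z (k : ℤ)).toNat : ℤ) = cumLen σ z (k : ℤ) := by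
          intro k y z hy hk hxz hz
          have hvz : IsSeqImage σ z (seqImg hσ z) := isSeqImage_seqImg hσ z
          have h1 : IsSeqImage σ x (shiftBy (cumLen σ z (k : ℤ)) (seqImg hσ z)) := by
            rw [hxz]; exact isSeqImage_shift hvz (k : ℤ)
          have hueq : seqImg hσ x = shiftBy (cumLen σ z (k : ℤ)) (seqImg hσ z) :=
            seqImage_unique hσ hux h1
          have hnn : (0 : ℤ) ≤ cumLen σ z (k : ℤ) :=
            le_trans (Int.natCast_nonneg k) (le_cumLen_of_nonneg hσ z (Int.natCast_nonneg k))
          have hcast : ((cumLen σ z (k : ℤ)).toNat : ℤ) = cumLen σ z (k : ℤ) :=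
            Int.toNat_of_nonneg hnn
          have hlt : cumLen σ z (k : ℤ) < ((morphComp σ τ (y 0)).length : ℤ) := by
            rw [← lenθ y z hz]
            have h2 := cumLen_strict hσ z
              (show (k : ℤ) < (((τ (y 0)).length : ℕ) : ℤ) by exact_mod_cast hk)
            omega
          refine ⟨⟨hy, by omega, seqImg hσ z, isSeqImage_comp hz hvz, ?_⟩, hcast⟩
          rw [hueq, hcast]
        obtain ⟨rep1, hc1⟩ := mkrep k y z hy hk hxz hz
        obtain ⟨rep2, hc2⟩ := mkrep k' y' z' hy' hk' hxz' hz'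
        obtain ⟨hKeq, hyeq⟩ := hrecθ (seqImg hσ x) _ _ y y' rep1 rep2
        have hzz : z = z' := by
          subst hyeq
          exact seqImage_unique hτ hz hz'
        rw [← hzz] at hc2 hKeq
        have hEL : cumLen σ z (k : ℤ) = cumLen σ z (k' : ℤ) := by omega
        have hkk : (k : ℤ) = (k' : ℤ) := by
          rcases lt_trichotomy (k : ℤ) (k' : ℤ) with h | h | h
          · have := cumLen_strict hσ z h; omega
          · exact h
          · have := cumLen_strict hσ z h; omega
        exact ⟨by exact_mod_cast hkk, hyeq⟩
      · -- σ recognizable in X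
        rintro u j j' x x' ⟨hxX, hj, vx, hvx, huvx⟩ ⟨hxX', hj', vx', hvx', huvx'⟩
        obtain ⟨k, y, hy, hk, z, hz, hxz⟩ := mem_repSet_of_mem_X hτ hY hX x hxX
        obtain ⟨k', y', hy', hk', z', hz', hxz'⟩ := mem_repSet_of_mem_X hτ hY hX x' hxX'
        have build : ∀ (j k : ℕ) (y : ℤ → A) (z : ℤ → B) (x : ℤ → B) (vx : ℤ → C),
            y ∈ Y → k < (τ (y 0)).length → IsSeqImage τ y z → x = shiftBy (k : ℤ) z →
            j < (σ (x 0)).length → IsSeqImage σ x vx → u = shiftBy (j : ℤ) vx →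
            IsCenteredRep (morphComp σ τ) Y u ((j : ℤ) + cumLen σ z (k : ℤ)).toNat y ∧
            (((j : ℤ) + cumLen σ z (k : ℤ)).toNat : ℤ) = (j : ℤ) + cumLen σ z (k : ℤ) ∧
            cumLen σ z (k : ℤ) ≤ (j : ℤ) + cumLen σ z (k : ℤ) ∧
            (j : ℤ) + cumLen σ z (k : ℤ) < cumLen σ z ((k : ℤ) + 1) := by
          intro j k y z x vx hy hk hz hxz hj hvx huvx
          have hvz : IsSeqImage σ z (seqImg hσ z) := isSeqImage_seqImg hσ z
          have hvxeq : vx = shiftBy (cumLen σ z (k : ℤ)) (seqImg hσ z) := by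
            apply seqImage_unique hσ hvx
            rw [hxz]; exact isSeqImage_shift hvz (k : ℤ)
          have hnn : (0 : ℤ) ≤ cumLen σ z (k : ℤ) :=
            le_trans (Int.natCast_nonneg k) (le_cumLen_of_nonneg hσ z (Int.natCast_nonneg k))
          have hsucc := cumLen_succ σ z (k : ℤ)
          have hx0 : x 0 = z (k : ℤ) := by
            rw [hxz]; show z (0 + (k : ℤ)) = _; rw [zero_add]
          have hjσ : (j : ℤ) < ((σ (z (k : ℤ))).length : ℤ) := by
            rw [← hx0]; exact_mod_cast hj
          have hK2 : (j : ℤ) + cumLen σ z (k : ℤ) < cumLen σ z ((k : ℤ) + 1) := by omega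
          have hKnn : (0 : ℤ) ≤ (j : ℤ) + cumLen σ z (k : ℤ) := by
            have := Int.natCast_nonneg j; omega
          have hcast : (((j : ℤ) + cumLen σ z (k : ℤ)).toNat : ℤ)
              = (j : ℤ) + cumLen σ z (k : ℤ) := Int.toNat_of_nonneg hKnn
          have hlt : (j : ℤ) + cumLen σ z (k : ℤ) < ((morphComp σ τ (y 0)).length : ℤ) := by
            rw [← lenθ y z hz]
            have hmono := cumLen_mono hσ z
              (show (k : ℤ) + 1 ≤ (((τ (y 0)).length : ℕ) : ℤ) by omega)
            omega
          refine ⟨⟨hy, by omega, seqImg hσ z, isSeqImage_comp hz hvz, ?_⟩, hcast, by omega, hK2⟩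
          rw [huvx, hvxeq, shiftBy_shiftBy, hcast]
        obtain ⟨rep1, hcast1, hlow1, hhigh1⟩ := build j k y z x vx hy hk hz hxz hj hvx huvx
        obtain ⟨rep2, hcast2, hlow2, hhigh2⟩ := build j' k' y' z' x' vx' hy' hk' hz' hxz' hj' hvx' huvx'
        obtain ⟨hKeq, hyeq⟩ := hrecθ u _ _ y y' rep1 rep2
        have hzz : z = z' := by
          subst hyeq
          exact seqImage_unique hτ hz hz'
        rw [← hzz] at hcast2 hlow2 hhigh2 hKeq
        have hEq : (j : ℤ) + cumLen σ z (k : ℤ) = (j' : ℤ) + cumLen σ z (k' : ℤ) := by omega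
        have hkk : (k : ℤ) = (k' : ℤ) :=
          idx_unique hσ z hlow1 hhigh1 (by omega) (by omega)
        rw [hkk] at hEq
        have hjj : j = j' := by omega
        have hkn : k = k' := by exact_mod_cast hkk
        refine ⟨hjj, ?_⟩
        rw [hxz, hxz', hzz, hkn]
    · rintro ⟨hrecτ, hrecσ⟩
      rintro u K K' y y' ⟨hy, hK, v, hv, huv⟩ ⟨hy', hK', v', hv', huv'⟩
      have decomp : ∀ (K : ℕ) (y : ℤ → A) (v : ℤ → C), y ∈ Y →
          K < (morphComp σ τ (y 0)).length →
          IsSeqImage (morphComp σ τ) y v → u = shiftBy (K : ℤ) v →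
          ∃ (k j : ℕ) (z x : ℤ → B),
            IsSeqImage τ y z ∧ x = shiftBy (k : ℤ) z ∧ k < (τ (y 0)).length ∧
            IsCenteredRep σ X u j x ∧ (K : ℤ) = cumLen σ z (k : ℤ) + (j : ℤ) := by
        intro K y v hy hK hv huv
        have hz : IsSeqImage τ y (seqImg hτ y) := isSeqImage_seqImg hτ y
        set z := seqImg hτ y with hzdef
        have hvz : IsSeqImage σ z (seqImg hσ z) := isSeqImage_seqImg hσ z
        have hveq : v = seqImg hσ z :=
          seqImage_unique hθne hv (isSeqImage_comp hz hvz)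
        obtain ⟨kz, hk1, hk2⟩ := exists_idx hσ z (K : ℤ)
        have hKnn : (0 : ℤ) ≤ (K : ℤ) := Int.natCast_nonneg K
        have hkz0 : 0 ≤ kz := by
          by_contra h
          have := cumLen_le_of_nonpos hσ z (show kz + 1 ≤ 0 by omega)
          omega
        have hkzL : kz < (((τ (y 0)).length : ℕ) : ℤ) := by
          have hKlt : (K : ℤ) < cumLen σ z (((τ (y 0)).length : ℕ) : ℤ) := by
            rw [lenθ y z hz]; exact_mod_cast hK
          by_contra h
          have := cumLen_mono hσ z (show (((τ (y 0)).length : ℕ) : ℤ) ≤ kz by omega)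
          omega
        have hkcast : ((kz.toNat : ℕ) : ℤ) = kz := Int.toNat_of_nonneg hkz0
        have hxX : shiftBy kz z ∈ X := hX.1.2 kz z (hX.2.1 y hy z hz)
        have hjcast : ((((K : ℤ) - cumLen σ z kz).toNat : ℕ) : ℤ)
            = (K : ℤ) - cumLen σ z kz := Int.toNat_of_nonneg (by omega)
        have hsucc := cumLen_succ σ z kz
        have hx0 : (shiftBy kz z) 0 = z kz := by
          show z (0 + kz) = _; rw [zero_add]
        have hjlt : (K : ℤ) - cumLen σ z kz < (((σ (z kz)).length : ℕ) : ℤ) := by omega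
        have hxs : IsSeqImage σ (shiftBy kz z) (shiftBy (cumLen σ z kz) (seqImg hσ z)) :=
          isSeqImage_shift hvz kz
        have hurep : u = shiftBy ((((K : ℤ) - cumLen σ z kz).toNat : ℕ) : ℤ)
            (shiftBy (cumLen σ z kz) (seqImg hσ z)) := by
          rw [huv, hveq, shiftBy_shiftBy,
            show ((((K : ℤ) - cumLen σ z kz).toNat : ℕ) : ℤ) + cumLen σ z kz = (K : ℤ) by omega]
        refine ⟨kz.toNat, ((K : ℤ) - cumLen σ z kz).toNat, z, shiftBy kz z, hz,
          by rw [hkcast], by omega, ⟨hxX, ?_, _, hxs, hurep⟩, by rw [hkcast]; omega⟩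
        rw [hx0]
        omega
      obtain ⟨k, j, z, x, hz, hxz, hk, hrepσ1, hKdec⟩ := decomp K y v hy hK hv huv
      obtain ⟨k', j', z', x', hz', hxz', hk', hrepσ2, hKdec'⟩ := decomp K' y' v' hy' hK' hv' huv'
      obtain ⟨hjj, hxx⟩ := hrecσ u j j' x x' hrepσ1 hrepσ2
      have hrepτ1 : IsCenteredRep τ Y x k y := ⟨hy, hk, z, hz, hxz⟩
      have hrepτ2 : IsCenteredRep τ Y x k' y' := ⟨hy', hk', z', hz', by rw [hxx]; exact hxz'⟩
      obtain ⟨hkk, hyy⟩ := hrecτ x k k' y y' hrepτ1 hrepτ2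
      refine ⟨?_, hyy⟩
      have hzz : z = z' := by
        subst hyy
        exact seqImage_unique hτ hz hz'
      have hfin : (K : ℤ) = (K' : ℤ) := by
        rw [hKdec, hKdec', hzz, hkk, hjj]
      exact_mod_cast hfin
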